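/- arXiv:1603.09094 — 3 statements merged into one kernel-verified Lean document; each statement's English description precedes it below -/
import Mathlib

section
/- Let (X_m)_{m≥1} be a sequence of nonnegative random variables, each defined on some probability space, and let (b_m) be positive reals with b_m → ∞. Suppose there exist p > 1 and C₀ > 0 such that for every β > 0: limsup_{m→∞} (1/b_m) · log E exp{ β X_m } ≤ C₀ β^p, and liminf_{m→∞} (1/b_m) · log E exp{ β b_m^{1/2} X_m^{1/2} } ≥ ((p+1)/p) · (pC₀)^{1/(p+1)} · (β/2)^{2p/(p+1)}. Then for every β > 0, lim_{m→∞} (1/b_m) · log E exp{ β X_m } = C₀ β^p. -/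
open MeasureTheory ProbabilityTheory Filter Topology Real Set ENNReal

noncomputable section

lemma aux_exists_real (x : EReal) (h1 : x ≠ ⊤) (h2 : x ≠ ⊥) : ∃ r : ℝ, x = (r : EReal) := by
  induction x using EReal.rec with
  | bot => exact absurd rfl h2
  | coe r => exact ⟨r, rfl⟩
  | top => exact absurd rfl h1

lemma aux_cancel (x : EReal) (r c : ℝ) (h : ((r + c : ℝ) : EReal) < (c : EReal) + x) :
    (r : EReal) < x := by
  induction x using EReal.rec with
  | bot => simp only [EReal.add_bot] at h; exact absurd h (EReal.bot_lt_coe _).not_gt.elim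
  | coe t =>
    rw [← EReal.coe_add, EReal.coe_lt_coe_iff] at h
    exact EReal.coe_lt_coe_iff.2 (by linarith)
  | top => exact EReal.coe_lt_top r

lemma aux_arith (p C₀ γ : ℝ) (hp : 1 < p) (hC₀ : 0 < C₀) (hγ : 0 < γ) :
    ((p + 1) / p) * (p * C₀) ^ ((1 : ℝ) / (p + 1)) *
      ((2 * Real.sqrt (p * C₀) * γ ^ ((p + 1) / 2) / 2) ^ (2 * p / (p + 1)))
      = C₀ * γ ^ p + (2 * Real.sqrt (p * C₀) * γ ^ ((p + 1) / 2)) ^ 2 / (4 * γ) := by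
  have hA : (0:ℝ) < p * C₀ := by positivity
  have hp1 : (0:ℝ) < p + 1 := by linarith
  have h1 : 2 * Real.sqrt (p * C₀) * γ ^ ((p + 1) / 2) / 2
      = (p * C₀) ^ ((1:ℝ)/2) * γ ^ ((p + 1) / 2) := by
    rw [Real.sqrt_eq_rpow]; ring
  rw [h1]
  have e1 : (1:ℝ)/2 * (2 * p / (p + 1)) = p/(p+1) := by field_simp
  have e2 : (p+1)/2 * (2 * p / (p + 1)) = p := by
    field_simp
  have h2 : ((p * C₀) ^ ((1:ℝ)/2) * γ ^ ((p + 1) / 2)) ^ (2 * p / (p + 1))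
      = (p * C₀) ^ (p / (p + 1)) * γ ^ p := by
    rw [Real.mul_rpow (by positivity) (by positivity),
      ← Real.rpow_mul hA.le, ← Real.rpow_mul hγ.le, e1, e2]
  rw [h2]
  have h3 : (2 * Real.sqrt (p * C₀) * γ ^ ((p + 1) / 2)) ^ 2
      = 4 * (p * C₀) * γ ^ (p + 1) := by
    rw [mul_pow, mul_pow, Real.sq_sqrt hA.le, ← Real.rpow_natCast (γ ^ ((p+1)/2)) 2,
      ← Real.rpow_mul hγ.le]
    norm_num
  rw [h3]
  have h4 : γ ^ (p + 1) = γ ^ p * γ := by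
    rw [Real.rpow_add hγ, Real.rpow_one]
  have h5 : (p * C₀) ^ ((1:ℝ)/(p+1)) * (p * C₀) ^ (p/(p+1)) = p * C₀ := by
    rw [← Real.rpow_add hA, ← add_div, show (1:ℝ)+p = p+1 by ring,
      div_self hp1.ne', Real.rpow_one]
  rw [h4]
  have hpne : p ≠ 0 := by linarith
  field_simp
  linear_combination (p+1) * h5

/-- Lemma A.2, first assertion.  Let `X_m ≥ 0` be random variables and
`b_m → ∞` positive reals.  If for every `β > 0`
`limsup (1/b_m) log E exp{β X_m} ≤ C₀ β^p` and
`liminf (1/b_m) log E exp{β √(b_m) √(X_m)} ≥ ((p+1)/p)(pC₀)^{1/(p+1)}(β/2)^{2p/(p+1)}`,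
then for every `β > 0`, `lim (1/b_m) log E exp{β X_m} = C₀ β^p`. -/
theorem statement_8
    (Ω : ℕ → Type*) [∀ m, MeasurableSpace (Ω m)]
    (P : ∀ m, Measure (Ω m)) [∀ m, IsProbabilityMeasure (P m)]
    (X : ∀ m, Ω m → ℝ) (hXmeas : ∀ m, Measurable (X m)) (hXnonneg : ∀ m ω, 0 ≤ X m ω)
    (b : ℕ → ℝ) (hbpos : ∀ m, 0 < b m) (hbtop : Tendsto b atTop atTop)
    (p C₀ : ℝ) (hp : 1 < p) (hC₀ : 0 < C₀)
    (hub : ∀ β : ℝ, 0 < β →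
      limsup (fun m : ℕ => ((1 / b m : ℝ) : EReal) *
          ENNReal.log (∫⁻ ω, ENNReal.ofReal (Real.exp (β * X m ω)) ∂(P m))) atTop
        ≤ ((C₀ * β ^ p : ℝ) : EReal))
    (hlb : ∀ β : ℝ, 0 < β →
      ((((p + 1) / p) * (p * C₀) ^ ((1 : ℝ) / (p + 1)) *
          (β / 2) ^ (2 * p / (p + 1)) : ℝ) : EReal)
        ≤ liminf (fun m : ℕ => ((1 / b m : ℝ) : EReal) *
            ENNReal.log (∫⁻ ω, ENNReal.ofReal
              (Real.exp (β * Real.sqrt (b m) * Real.sqrt (X m ω))) ∂(P m))) atTop) :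
    ∀ β : ℝ, 0 < β →
      Tendsto (fun m : ℕ => ((1 / b m : ℝ) : EReal) *
          ENNReal.log (∫⁻ ω, ENNReal.ofReal (Real.exp (β * X m ω)) ∂(P m))) atTop
        (𝓝 ((C₀ * β ^ p : ℝ) : EReal)) := by
  intro γ hγ
  have hppos : (0:ℝ) < p := lt_trans one_pos hp
  obtain ⟨β, hβdef, hβ⟩ : ∃ β : ℝ, β = 2 * Real.sqrt (p * C₀) * γ ^ ((p + 1) / 2) ∧ 0 < β := by
    refine ⟨_, rfl, ?_⟩
    have h1 := Real.sqrt_pos.2 (show (0:ℝ) < p * C₀ by positivity)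
    have h2 := Real.rpow_pos_of_pos hγ ((p + 1) / 2)
    positivity
  -- abbreviations
  set Iγ : ℕ → ℝ≥0∞ := fun m => ∫⁻ ω, ENNReal.ofReal (Real.exp (γ * X m ω)) ∂(P m) with hIγdef
  set Is : ℕ → ℝ≥0∞ := fun m =>
    ∫⁻ ω, ENNReal.ofReal (Real.exp (β * Real.sqrt (b m) * Real.sqrt (X m ω))) ∂(P m) with hIsdef
  have hmeasγ : ∀ m, Measurable fun ω => ENNReal.ofReal (Real.exp (γ * X m ω)) := fun m =>
    ENNReal.measurable_ofReal.comp (Real.measurable_exp.comp ((hXmeas m).const_mul γ))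
  have hIγ1 : ∀ m, 1 ≤ Iγ m := by
    intro m
    calc (1:ℝ≥0∞) = ∫⁻ _, 1 ∂(P m) := by simp
      _ ≤ Iγ m := by
          refine lintegral_mono fun ω => ?_
          rw [← ENNReal.ofReal_one]
          exact ENNReal.ofReal_le_ofReal (Real.one_le_exp (mul_nonneg hγ.le (hXnonneg m ω)))
  have hIs1 : ∀ m, 1 ≤ Is m := by
    intro m
    calc (1:ℝ≥0∞) = ∫⁻ _, 1 ∂(P m) := by simp
      _ ≤ Is m := by
          refine lintegral_mono fun ω => ?_
          rw [← ENNReal.ofReal_one]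
          exact ENNReal.ofReal_le_ofReal (Real.one_le_exp
            (mul_nonneg (mul_nonneg hβ.le (Real.sqrt_nonneg _)) (Real.sqrt_nonneg _)))
  have hf0 : ∀ m, (0:EReal) ≤ ((1 / b m : ℝ) : EReal) * ENNReal.log (Iγ m) := by
    intro m
    refine mul_nonneg ?_ (ENNReal.zero_le_log_iff.2 (hIγ1 m))
    exact_mod_cast one_div_nonneg.2 (hbpos m).le
  -- key pointwise bound
  have hkey : ∀ m, ((1 / b m : ℝ) : EReal) * ENNReal.log (Is m)
      ≤ ((β ^ 2 / (4 * γ) : ℝ) : EReal) + ((1 / b m : ℝ) : EReal) * ENNReal.log (Iγ m) := by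
    intro m
    have hbm := hbpos m
    have hptwise : ∀ ω, Real.exp (β * Real.sqrt (b m) * Real.sqrt (X m ω))
        ≤ Real.exp (β ^ 2 * b m / (4 * γ)) * Real.exp (γ * X m ω) := by
      intro ω
      rw [← Real.exp_add]
      refine Real.exp_le_exp.2 ?_
      have hu := Real.sqrt_nonneg (X m ω)
      have hs := Real.sqrt_nonneg (b m)
      have hu2 : Real.sqrt (X m ω) ^ 2 = X m ω := Real.sq_sqrt (hXnonneg m ω)
      have hs2 : Real.sqrt (b m) ^ 2 = b m := Real.sq_sqrt hbm.le
      have h4 : (0:ℝ) < 4 * γ := by positivity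
      rw [← mul_le_mul_iff_of_pos_right h4, add_mul, div_mul_cancel₀ _ h4.ne']
      have e1 : β ^ 2 * Real.sqrt (b m) ^ 2 = β ^ 2 * b m := by rw [hs2]
      have e2 : (2 * γ) ^ 2 * Real.sqrt (X m ω) ^ 2 = 4 * γ ^ 2 * X m ω := by rw [hu2]; ring
      nlinarith [sq_nonneg (2 * γ * Real.sqrt (X m ω) - β * Real.sqrt (b m)), e1, e2]
    have hInt : Is m ≤ ENNReal.ofReal (Real.exp (β ^ 2 * b m / (4 * γ))) * Iγ m := by
      calc Is m ≤ ∫⁻ ω, ENNReal.ofReal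
            (Real.exp (β ^ 2 * b m / (4 * γ)) * Real.exp (γ * X m ω)) ∂(P m) :=
          lintegral_mono fun ω => ENNReal.ofReal_le_ofReal (hptwise ω)
        _ = ∫⁻ ω, ENNReal.ofReal (Real.exp (β ^ 2 * b m / (4 * γ)))
              * ENNReal.ofReal (Real.exp (γ * X m ω)) ∂(P m) := by
            simp_rw [ENNReal.ofReal_mul (Real.exp_nonneg _)]
        _ = ENNReal.ofReal (Real.exp (β ^ 2 * b m / (4 * γ))) * Iγ m :=
            lintegral_const_mul _ (hmeasγ m)
    have hlogle : ENNReal.log (Is m)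
        ≤ ((β ^ 2 * b m / (4 * γ) : ℝ) : EReal) + ENNReal.log (Iγ m) := by
      calc ENNReal.log (Is m)
          ≤ ENNReal.log (ENNReal.ofReal (Real.exp (β ^ 2 * b m / (4 * γ))) * Iγ m) :=
            ENNReal.log_monotone hInt
        _ = ENNReal.log (ENNReal.ofReal (Real.exp (β ^ 2 * b m / (4 * γ))))
            + ENNReal.log (Iγ m) := ENNReal.log_mul_add
        _ = ((β ^ 2 * b m / (4 * γ) : ℝ) : EReal) + ENNReal.log (Iγ m) := by
            rw [ENNReal.log_ofReal_of_pos (Real.exp_pos _), Real.log_exp]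
    by_cases htop : ENNReal.log (Iγ m) = ⊤
    · rw [htop, EReal.coe_mul_top_of_pos (one_div_pos.2 hbm), EReal.coe_add_top]
      exact le_top
    · have h0γ : (0:EReal) ≤ ENNReal.log (Iγ m) := ENNReal.zero_le_log_iff.2 (hIγ1 m)
      have hbotγ : ENNReal.log (Iγ m) ≠ ⊥ := fun h => by simp [h] at h0γ
      obtain ⟨r, hr⟩ := aux_exists_real _ htop hbotγ
      rw [hr] at hlogle ⊢
      have hstop : ENNReal.log (Is m) ≠ ⊤ := by
        refine (lt_of_le_of_lt hlogle ?_).ne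
        rw [← EReal.coe_add]; exact EReal.coe_lt_top _
      have h0s : (0:EReal) ≤ ENNReal.log (Is m) := ENNReal.zero_le_log_iff.2 (hIs1 m)
      have hbots : ENNReal.log (Is m) ≠ ⊥ := fun h => by simp [h] at h0s
      obtain ⟨s, hs⟩ := aux_exists_real _ hstop hbots
      rw [hs] at hlogle ⊢
      rw [← EReal.coe_add, EReal.coe_le_coe_iff] at hlogle
      rw [← EReal.coe_mul, ← EReal.coe_mul, ← EReal.coe_add, EReal.coe_le_coe_iff]
      have h1b : (0:ℝ) < 1 / b m := one_div_pos.2 hbm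
      calc 1 / b m * s ≤ 1 / b m * (β ^ 2 * b m / (4 * γ) + r) :=
            mul_le_mul_of_nonneg_left hlogle h1b.le
        _ = β ^ 2 / (4 * γ) + 1 / b m * r := by
            rw [mul_add, mul_comm (β ^ 2) (b m), ← mul_div_assoc, ← mul_assoc,
              one_div_mul_cancel hbm.ne', one_mul]
  -- lower bound for the liminf
  have harith : ((p + 1) / p) * (p * C₀) ^ ((1 : ℝ) / (p + 1)) * (β / 2) ^ (2 * p / (p + 1))
      = C₀ * γ ^ p + β ^ 2 / (4 * γ) := by
    rw [hβdef]; exact aux_arith p C₀ γ hp hC₀ hγ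
  have hliminf : ((C₀ * γ ^ p : ℝ) : EReal)
      ≤ liminf (fun m : ℕ => ((1 / b m : ℝ) : EReal) * ENNReal.log (Iγ m)) atTop := by
    rw [le_liminf_iff]
    intro y hy
    induction y using EReal.rec with
    | bot =>
      exact Eventually.of_forall fun m => lt_of_lt_of_le (by norm_num : (⊥:EReal) < 0) (hf0 m)
    | coe r =>
      have hr : r < C₀ * γ ^ p := EReal.coe_lt_coe_iff.1 hy
      have hev : ∀ᶠ m in atTop,
          ((r + β ^ 2 / (4 * γ) : ℝ) : EReal) < ((1 / b m : ℝ) : EReal) * ENNReal.log (Is m) := by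
        have h' := hlb β hβ
        rw [le_liminf_iff] at h'
        refine h' _ ?_
        rw [EReal.coe_lt_coe_iff, harith]
        linarith
      filter_upwards [hev] with m hm
      exact aux_cancel _ r _ (lt_of_lt_of_le hm (hkey m))
    | top => simp at hy
  exact tendsto_of_le_liminf_of_limsup_le hliminf (hub γ hγ)
end
end

section
/- Let (X_m)_{m≥1} be a sequence of nonnegative random variables, each defined on some probability space, and let (b_m) be positive reals with b_m → ∞. Suppose there exist p > 1 and C₀ > 0 such that: for every β > 0, limsup_{m→∞} (1/b_m) · log E exp{ β X_m } < ∞, and for every β > 0, lim_{m→∞} (1/b_m) · log E exp{ β (b_m X_m)^{1/2} } = ((p+1)/p) · (pC₀)^{1/(p+1)} · (β/2)^{2p/(p+1)}. Then for every β > 0, lim_{m→∞} (1/b_m) · log E exp{ β X_m } = C₀ β^p. -/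
open MeasureTheory ProbabilityTheory Filter Topology Real Set ENNReal

noncomputable section



lemma st9_bern {p u : ℝ} (hp : 1 ≤ p) (hu : 0 ≤ u) : (p+1)*u - p ≤ u^(p+1) := by
  have h := one_add_mul_self_le_rpow_one_add (show (-1:ℝ) ≤ u - 1 by linarith)
    (show (1:ℝ) ≤ p + 1 by linarith)
  have h2 : (1:ℝ) + (u - 1) = u := by ring
  rw [h2] at h
  linarith

lemma st9_lamstar {p C₀ t : ℝ} (hp : 1 < p) (hC₀ : 0 < C₀) (ht : 0 < t) :
    ((p + 1) / p) * (p * C₀) ^ ((1:ℝ) / (p + 1)) *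
      ((2 * Real.sqrt (p * C₀) * t ^ ((p+1)/2)) / 2) ^ (2 * p / (p + 1))
    = (p + 1) * C₀ * t ^ p := by
  have hp0 : (0:ℝ) < p := by linarith
  have hpc : (0:ℝ) < p * C₀ := by positivity
  have hq : (0:ℝ) < p + 1 := by linarith
  have h1 : (2 * Real.sqrt (p * C₀) * t ^ ((p+1)/2)) / 2
      = Real.sqrt (p * C₀) * t ^ ((p+1)/2) := by ring
  rw [h1, Real.mul_rpow (Real.sqrt_nonneg _) (Real.rpow_nonneg ht.le _),
    Real.sqrt_eq_rpow, ← Real.rpow_mul hpc.le, ← Real.rpow_mul ht.le]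
  have e1 : 1/2 * (2 * p / (p + 1)) = p / (p+1) := by field_simp
  have e2 : (p+1)/2 * (2 * p / (p + 1)) = p := by field_simp
  rw [e1, e2]
  have e3 : (p * C₀) ^ ((1:ℝ) / (p + 1)) * (p * C₀) ^ (p / (p+1)) = p * C₀ := by
    rw [← Real.rpow_add hpc]
    have : (1:ℝ) / (p + 1) + p / (p+1) = 1 := by field_simp; ring
    rw [this, Real.rpow_one]
  calc (p + 1) / p * (p * C₀) ^ ((1:ℝ) / (p + 1)) * ((p * C₀) ^ (p / (p+1)) * t ^ p)
      = (p + 1) / p * ((p * C₀) ^ ((1:ℝ) / (p + 1)) * (p * C₀) ^ (p / (p+1))) * t ^ p := by ring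
    _ = (p + 1) / p * (p * C₀) * t ^ p := by rw [e3]
    _ = (p + 1) * C₀ * t ^ p := by field_simp

lemma st9_sq {p C₀ t : ℝ} (hC₀ : 0 < C₀) (hp : 0 < p) (ht : 0 < t) :
    (2 * Real.sqrt (p * C₀) * t ^ ((p+1)/2))^2 = 4 * p * C₀ * t ^ (p+1) := by
  have h1 : (t ^ ((p+1)/2))^2 = t ^ (p+1) := by
    rw [← Real.rpow_natCast (t ^ ((p+1)/2)) 2, ← Real.rpow_mul ht.le]
    norm_num
  have h2 : (Real.sqrt (p * C₀))^2 = p * C₀ := Real.sq_sqrt (by positivity)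
  nlinarith [h1, h2]

lemma st9_lamstar_lower {p C₀ β : ℝ} (hp : 1 < p) (hC₀ : 0 < C₀) (hβ : 0 < β) :
    ((p + 1) / p) * (p * C₀) ^ ((1:ℝ) / (p + 1)) *
      ((2 * Real.sqrt (p * C₀) * β ^ ((p+1)/2)) / 2) ^ (2 * p / (p + 1))
    = C₀ * β ^ p + (2 * Real.sqrt (p * C₀) * β ^ ((p+1)/2))^2 / (4 * β) := by
  rw [st9_lamstar hp hC₀ hβ, st9_sq hC₀ (by linarith) hβ]
  have h1 : β ^ (p+1) = β ^ p * β := by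
    rw [Real.rpow_add hβ, Real.rpow_one]
  rw [h1]
  field_simp
  ring

lemma st9_young {p C₀ s β : ℝ} (hp : 1 < p) (hC₀ : 0 < C₀) (hs : 0 ≤ s) (hβ : 0 < β) :
    ((p + 1) / p) * (p * C₀) ^ ((1:ℝ) / (p + 1)) * (s / 2) ^ (2 * p / (p + 1))
      ≤ s^2 / (4 * β) + C₀ * β ^ p := by
  have hp0 : (0:ℝ) < p := by linarith
  have hpc : (0:ℝ) < p * C₀ := by positivity
  rcases eq_or_lt_of_le hs with h0 | hs
  · rw [← h0]
    have : ((0:ℝ) / 2) ^ (2 * p / (p + 1)) = 0 := by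
      rw [zero_div, Real.zero_rpow (by positivity : 2 * p / (p + 1) ≠ 0)]
    rw [this]
    have : (0:ℝ) ≤ C₀ * β ^ p := by positivity
    simp only [mul_zero]
    positivity
  · -- s > 0
    set t : ℝ := (s / (2 * Real.sqrt (p * C₀))) ^ ((2:ℝ)/(p+1)) with htdef
    have hbase : 0 < s / (2 * Real.sqrt (p * C₀)) := by positivity
    have ht : 0 < t := Real.rpow_pos_of_pos hbase _
    have hseq : s = 2 * Real.sqrt (p * C₀) * t ^ ((p+1)/2) := by
      rw [htdef, ← Real.rpow_mul hbase.le]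
      have : (2:ℝ)/(p+1) * ((p+1)/2) = 1 := by field_simp
      rw [this, Real.rpow_one]
      field_simp
    rw [hseq, st9_lamstar hp hC₀ ht, st9_sq hC₀ hp0 ht]
    -- goal : (p+1)*C₀*t^p ≤ 4*p*C₀*t^(p+1)/(4*β) + C₀*β^p
    set u : ℝ := β / t with hudef
    have hu : 0 < u := by positivity
    have hβut : β = u * t := by rw [hudef]; field_simp
    have h1 : β ^ p = u ^ p * t ^ p := by rw [hβut, Real.mul_rpow hu.le ht.le]
    have h2 : t ^ (p+1) = t ^ p * t := by rw [Real.rpow_add ht, Real.rpow_one]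
    have h3 : u ^ (p+1) = u ^ p * u := by rw [Real.rpow_add hu, Real.rpow_one]
    have hber := st9_bern (le_of_lt hp) hu.le
    rw [h3] at hber
    have key : 0 ≤ p / u + u ^ p - (p+1) := by
      have hnum : 0 ≤ p + u ^ p * u - (p+1) * u := by linarith
      have heq : p / u + u ^ p - (p+1) = (p + u ^ p * u - (p+1) * u) / u := by
        field_simp
      rw [heq]
      exact div_nonneg hnum hu.le
    have hrw : 4 * p * C₀ * t ^ (p+1) / (4 * β) = p * C₀ * t ^ p / u := by
      rw [h2, hβut]; field_simp
    rw [hrw, h1]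
    have expand : p * C₀ * t ^ p / u + C₀ * (u ^ p * t ^ p) - (p+1) * C₀ * t ^ p
        = (C₀ * t ^ p) * (p / u + u ^ p - (p+1)) := by field_simp
    have hpos : 0 ≤ C₀ * t ^ p := by positivity
    nlinarith [mul_nonneg hpos key]

lemma st9_amgm {s bb x β : ℝ} (hs : 0 ≤ s) (hbb : 0 ≤ bb) (hx : 0 ≤ x) (hβ : 0 < β) :
    s * Real.sqrt (bb * x) ≤ s^2 * bb / (4 * β) + β * x := by
  rw [Real.sqrt_mul hbb]
  have h1 := Real.sq_sqrt hbb
  have h2 := Real.sq_sqrt hx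
  have h3 := Real.sqrt_nonneg bb
  have h4 := Real.sqrt_nonneg x
  have h5 := sq_nonneg (s * Real.sqrt bb - 2 * β * Real.sqrt x)
  have h6 : 0 < 4 * β := by linarith
  have key : 4*β*(s*(Real.sqrt bb * Real.sqrt x)) ≤ s^2*bb + 4*β*(β*x) := by
    have h5' : (s*Real.sqrt bb - 2*β*Real.sqrt x)^2
        = s^2*Real.sqrt bb^2 - 4*β*(s*(Real.sqrt bb*Real.sqrt x)) + 4*β^2*Real.sqrt x^2 := by
      ring
    rw [h1, h2] at h5'
    nlinarith [h5, h5']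
  calc s*(Real.sqrt bb * Real.sqrt x) = (4*β*(s*(Real.sqrt bb * Real.sqrt x)))/(4*β) := by
        field_simp
    _ ≤ (s^2*bb + 4*β*(β*x))/(4*β) := by gcongr
    _ = s^2*bb/(4*β) + β*x := by field_simp


lemma st9_cover {β K bb x : ℝ} {N : ℕ} (hβ : 0 < β) (hK : 0 < K) (hN : 1 ≤ N)
    (hb : 0 < bb) (hx : 0 ≤ x) (hxK : x ≤ K^2 * bb) :
    ∃ j ∈ Finset.Icc 1 N, β * x ≤ ((j:ℝ) * (2*β*K/N)) * Real.sqrt (bb * x)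
      - bb * ((j:ℝ) * (2*β*K/N))^2 / (4*β) + bb * (2*β*K^2/N) := by
  have hNpos : (0:ℝ) < N := by exact_mod_cast hN
  set δ : ℝ := 2*β*K/N with hδdef
  have hδ : 0 < δ := by positivity
  set v : ℝ := Real.sqrt (x / bb) with hvdef
  have hv0 : 0 ≤ v := Real.sqrt_nonneg _
  have hv2 : v^2 = x / bb := Real.sq_sqrt (by positivity)
  have hvK : v ≤ K := by
    have h1 : x / bb ≤ K^2 := by rw [div_le_iff₀ hb]; linarith
    calc v = Real.sqrt (x/bb) := rfl
      _ ≤ Real.sqrt (K^2) := Real.sqrt_le_sqrt h1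
      _ = K := Real.sqrt_sq hK.le
  set s₀ : ℝ := 2*β*v with hs₀def
  have hs₀0 : 0 ≤ s₀ := by positivity
  have hs₀K : s₀ ≤ 2*β*K := by
    have := mul_le_mul_of_nonneg_left hvK (by positivity : (0:ℝ) ≤ 2*β)
    linarith
  refine ⟨max 1 ⌈s₀/δ⌉₊, Finset.mem_Icc.mpr ⟨le_max_left _ _, ?_⟩, ?_⟩
  · refine max_le hN (Nat.ceil_le.mpr ?_)
    rw [div_le_iff₀ hδ]
    calc s₀ ≤ 2*β*K := hs₀K
      _ = (N:ℝ) * δ := by rw [hδdef]; field_simp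
  · set j : ℕ := max 1 ⌈s₀/δ⌉₊ with hjdef
    have hjN : (j:ℝ) ≤ N := by
      have : j ≤ N := max_le hN (Nat.ceil_le.mpr (by
        rw [div_le_iff₀ hδ]
        calc s₀ ≤ 2*β*K := hs₀K
          _ = (N:ℝ) * δ := by rw [hδdef]; field_simp))
      exact_mod_cast this
    set s : ℝ := (j:ℝ) * δ with hsdef
    have hlow : s₀ ≤ s := by
      have h1 : s₀/δ ≤ (⌈s₀/δ⌉₊:ℝ) := Nat.le_ceil _
      have h2 : (⌈s₀/δ⌉₊:ℝ) ≤ (j:ℝ) := by exact_mod_cast le_max_right 1 ⌈s₀/δ⌉₊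
      rw [hsdef, ← div_le_iff₀ hδ] at *
      linarith
    have hhigh : s ≤ s₀ + δ := by
      rcases le_or_gt (⌈s₀/δ⌉₊) 1 with h | h
      · have : j = 1 := by rw [hjdef]; omega
        rw [hsdef, this]
        push_cast
        linarith
      · have hj2 : j = ⌈s₀/δ⌉₊ := by rw [hjdef]; omega
        have h3 : (⌈s₀/δ⌉₊:ℝ) < s₀/δ + 1 := Nat.ceil_lt_add_one (by positivity)
        rw [hsdef, hj2]
        have h4 : (⌈s₀/δ⌉₊:ℝ) * δ < (s₀/δ + 1) * δ := by
          exact mul_lt_mul_of_pos_right h3 hδ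
        have h5 : (s₀/δ + 1) * δ = s₀ + δ := by field_simp
        linarith
    have hsK : s ≤ 2*β*K := by
      calc s = (j:ℝ)*δ := rfl
        _ ≤ (N:ℝ)*δ := mul_le_mul_of_nonneg_right hjN hδ.le
        _ = 2*β*K := by rw [hδdef]; field_simp
    have hsqrt : Real.sqrt (bb * x) = bb * v := by
      have h1 : bb * x = (bb * v)^2 := by
        rw [mul_pow, hv2]
        field_simp
      rw [h1, Real.sqrt_sq (by positivity)]
    have hxv : x = bb * v^2 := by rw [hv2]; field_simp
    -- identity: β*x = s₀*(bb*v) - bb*s₀^2/(4*β)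
    have hid : β * x = s₀*(bb*v) - bb*s₀^2/(4*β) := by
      rw [hxv, hs₀def]; field_simp; ring
    have hmono : s₀*(bb*v) ≤ s*(bb*v) :=
      mul_le_mul_of_nonneg_right hlow (by positivity)
    have hkey : s^2 - s₀^2 ≤ 8*β^2*K^2/N := by
      have h1 : s - s₀ ≤ δ := by linarith
      have h2 : s + s₀ ≤ 4*β*K := by linarith
      have h3 : 0 ≤ s + s₀ := by linarith
      have h4 : 0 ≤ s - s₀ := by linarith
      have h5 : (s-s₀)*(s+s₀) ≤ δ*(4*β*K) := mul_le_mul h1 h2 h3 hδ.le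
      have h6 : δ*(4*β*K) = 8*β^2*K^2/N := by rw [hδdef]; field_simp; ring
      nlinarith [h5, h6]
    have hcorr : bb*(s^2 - s₀^2)/(4*β) ≤ bb*(2*β*K^2/N) := by
      calc bb*(s^2-s₀^2)/(4*β) ≤ bb*(8*β^2*K^2/N)/(4*β) := by gcongr
        _ = bb*(2*β*K^2/N) := by field_simp; ring
    have hsplit : bb*s^2/(4*β) - bb*s₀^2/(4*β) = bb*(s^2-s₀^2)/(4*β) := by ring
    rw [hid]
    have : s*(bb*v) = ((j:ℝ) * (2*β*K/N)) * Real.sqrt (bb*x) := by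
      rw [hsqrt, hsdef, hδdef]
    rw [← this]
    have hs2 : bb * ((j:ℝ) * (2*β*K/N))^2 / (4*β) = bb*s^2/(4*β) := by
      rw [hsdef, hδdef]
    rw [hs2]
    linarith

lemma st9_pointwise {β K bb x : ℝ} {N : ℕ} (hβ : 0 < β) (hK : 0 < K) (hN : 1 ≤ N)
    (hb : 0 < bb) (hx : 0 ≤ x) :
    Real.exp (β * x) ≤
      (∑ j ∈ Finset.Icc 1 N, Real.exp (2*β*K^2/N*bb - bb*((j:ℝ)*(2*β*K/N))^2/(4*β))
        * Real.exp (((j:ℝ)*(2*β*K/N)) * Real.sqrt (bb * x)))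
      + Real.exp (-(β*K^2*bb)) * Real.exp (2*β*x) := by
  by_cases hxK : x ≤ K^2 * bb
  · obtain ⟨j, hj, hineq⟩ := st9_cover hβ hK hN hb hx hxK
    have h1 : Real.exp (β * x) ≤ Real.exp (2*β*K^2/N*bb - bb*((j:ℝ)*(2*β*K/N))^2/(4*β))
        * Real.exp (((j:ℝ)*(2*β*K/N)) * Real.sqrt (bb * x)) := by
      rw [← Real.exp_add]
      apply Real.exp_le_exp.2
      linarith
    calc Real.exp (β * x)
        ≤ Real.exp (2*β*K^2/N*bb - bb*((j:ℝ)*(2*β*K/N))^2/(4*β))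
          * Real.exp (((j:ℝ)*(2*β*K/N)) * Real.sqrt (bb * x)) := h1
      _ ≤ ∑ j ∈ Finset.Icc 1 N, Real.exp (2*β*K^2/N*bb - bb*((j:ℝ)*(2*β*K/N))^2/(4*β))
          * Real.exp (((j:ℝ)*(2*β*K/N)) * Real.sqrt (bb * x)) := by
          apply Finset.single_le_sum (f := fun j : ℕ =>
            Real.exp (2*β*K^2/N*bb - bb*((j:ℝ)*(2*β*K/N))^2/(4*β))
            * Real.exp (((j:ℝ)*(2*β*K/N)) * Real.sqrt (bb * x)))
            (fun i _ => by positivity) hj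
      _ ≤ _ := le_add_of_nonneg_right (by positivity)
  · push_neg at hxK
    have h1 : Real.exp (β * x) ≤ Real.exp (-(β*K^2*bb)) * Real.exp (2*β*x) := by
      rw [← Real.exp_add]
      apply Real.exp_le_exp.2
      nlinarith
    calc Real.exp (β*x) ≤ Real.exp (-(β*K^2*bb)) * Real.exp (2*β*x) := h1
      _ ≤ _ := le_add_of_nonneg_left (Finset.sum_nonneg fun i _ => by positivity)



lemma st9_mul_le {bm c : ℝ} (hb : 0 < bm) {x : EReal} (h : x ≤ (c : EReal)) :
    ((1/bm : ℝ) : EReal) * x ≤ ((1/bm * c : ℝ) : EReal) := by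
  induction x using EReal.rec with
  | bot =>
      rw [EReal.coe_mul_bot_of_pos (by positivity)]
      exact bot_le
  | coe r =>
      rw [← EReal.coe_mul]
      have hr : r ≤ c := EReal.coe_le_coe_iff.1 h
      exact EReal.coe_le_coe_iff.2 (by nlinarith [hb, one_div_pos.2 hb])
  | top => exact absurd h (by simp)

lemma st9_le_mul {bm r : ℝ} (hb : 0 < bm) {x : EReal} (h : (r : EReal) ≤ x) :
    ((1/bm * r : ℝ) : EReal) ≤ ((1/bm : ℝ) : EReal) * x := by
  induction x using EReal.rec with
  | bot => exact absurd h (by simp)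
  | coe s =>
      rw [← EReal.coe_mul]
      have hr : r ≤ s := EReal.coe_le_coe_iff.1 h
      exact EReal.coe_le_coe_iff.2 (by nlinarith [hb, one_div_pos.2 hb])
  | top =>
      rw [EReal.coe_mul_top_of_pos (by positivity)]
      exact le_top

lemma st9_expbound {bm c : ℝ} (hb : 0 < bm) {Jv : ℝ≥0∞}
    (h : ((1/bm : ℝ) : EReal) * ENNReal.log Jv < (c : EReal)) :
    Jv ≤ ENNReal.ofReal (Real.exp (c * bm)) := by
  have hlog : ENNReal.log Jv ≤ ((c * bm : ℝ) : EReal) := by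
    by_contra hcon
    push_neg at hcon
    have h2 := st9_le_mul hb hcon.le
    rw [show 1/bm * (c*bm) = c from by field_simp] at h2
    exact absurd (lt_of_le_of_lt h2 h) (lt_irrefl _)
  calc Jv = EReal.exp (ENNReal.log Jv) := (ENNReal.exp_log Jv).symm
    _ ≤ EReal.exp ((c * bm : ℝ) : EReal) := EReal.exp_monotone hlog
    _ = ENNReal.ofReal (Real.exp (c * bm)) := EReal.exp_coe _

lemma st9_log_le {c : ℝ} {Iv : ℝ≥0∞} (h : Iv ≤ ENNReal.ofReal (Real.exp c)) :
    ENNReal.log Iv ≤ (c : EReal) := by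
  calc ENNReal.log Iv ≤ ENNReal.log (ENNReal.ofReal (Real.exp c)) := ENNReal.log_monotone h
    _ = ((Real.log (Real.exp c) : ℝ) : EReal) := ENNReal.log_ofReal_of_pos (Real.exp_pos _)
    _ = (c : EReal) := by rw [Real.log_exp]

lemma st9_lower_step {bm d c : ℝ} (hb : 0 < bm) {Jv Iv : ℝ≥0∞}
    (hJI : Jv ≤ ENNReal.ofReal (Real.exp (c * bm)) * Iv)
    (h : ((d + c : ℝ) : EReal) < ((1/bm : ℝ) : EReal) * ENNReal.log Jv) :
    ((d : ℝ) : EReal) < ((1/bm : ℝ) : EReal) * ENNReal.log Iv := by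
  have hlogJ : ENNReal.log Jv ≤ ((c * bm : ℝ) : EReal) + ENNReal.log Iv := by
    calc ENNReal.log Jv ≤ ENNReal.log (ENNReal.ofReal (Real.exp (c * bm)) * Iv) :=
          ENNReal.log_monotone hJI
      _ = ENNReal.log (ENNReal.ofReal (Real.exp (c * bm))) + ENNReal.log Iv :=
          ENNReal.log_mul_add
      _ = ((c * bm : ℝ) : EReal) + ENNReal.log Iv := by
          rw [ENNReal.log_ofReal_of_pos (Real.exp_pos _), Real.log_exp]
  generalize hIv : ENNReal.log Iv = lI at *
  induction lI using EReal.rec with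
  | bot =>
      rw [EReal.add_bot] at hlogJ
      have : ENNReal.log Jv = ⊥ := le_bot_iff.1 hlogJ
      rw [this, EReal.coe_mul_bot_of_pos (by positivity)] at h
      exact absurd h (not_lt_bot)
  | coe r =>
      have hlogJ' : ENNReal.log Jv ≤ ((c * bm + r : ℝ) : EReal) := by
        rw [EReal.coe_add]; exact hlogJ
      have h2 := st9_mul_le hb hlogJ'
      have h3 : ((d + c : ℝ) : EReal) < ((1/bm * (c * bm + r) : ℝ) : EReal) :=
        lt_of_lt_of_le h h2
      have h4 : d + c < 1/bm * (c * bm + r) := EReal.coe_lt_coe_iff.1 h3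
      rw [show 1/bm * (c*bm + r) = c + 1/bm * r from by field_simp] at h4
      rw [← EReal.coe_mul]
      exact EReal.coe_lt_coe_iff.2 (by linarith)
  | top =>
      rw [EReal.coe_mul_top_of_pos (by positivity)]
      exact EReal.coe_lt_top d


/-- Lemma A.2, second assertion.  Let `X_m ≥ 0` be random variables and
`b_m → ∞` positive reals.  If for every `β > 0`
`limsup (1/b_m) log E exp{β X_m} < ∞` and
`lim (1/b_m) log E exp{β (b_m X_m)^{1/2}} = ((p+1)/p)(pC₀)^{1/(p+1)}(β/2)^{2p/(p+1)}`,
then for every `β > 0`, `lim (1/b_m) log E exp{β X_m} = C₀ β^p`. -/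
theorem statement_9
    (Ω : ℕ → Type*) [∀ m, MeasurableSpace (Ω m)]
    (P : ∀ m, Measure (Ω m)) [∀ m, IsProbabilityMeasure (P m)]
    (X : ∀ m, Ω m → ℝ) (hXmeas : ∀ m, Measurable (X m)) (hXnonneg : ∀ m ω, 0 ≤ X m ω)
    (b : ℕ → ℝ) (hbpos : ∀ m, 0 < b m) (hbtop : Tendsto b atTop atTop)
    (p C₀ : ℝ) (hp : 1 < p) (hC₀ : 0 < C₀)
    (hub : ∀ β : ℝ, 0 < β →
      limsup (fun m : ℕ => ((1 / b m : ℝ) : EReal) *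
          ENNReal.log (∫⁻ ω, ENNReal.ofReal (Real.exp (β * X m ω)) ∂(P m))) atTop
        < (⊤ : EReal))
    (hlb : ∀ β : ℝ, 0 < β →
      Tendsto (fun m : ℕ => ((1 / b m : ℝ) : EReal) *
          ENNReal.log (∫⁻ ω, ENNReal.ofReal
            (Real.exp (β * Real.sqrt (b m * X m ω))) ∂(P m))) atTop
        (𝓝 (((((p + 1) / p) * (p * C₀) ^ ((1 : ℝ) / (p + 1)) *
          (β / 2) ^ (2 * p / (p + 1)) : ℝ)) : EReal))) :
    ∀ β : ℝ, 0 < β →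
      Tendsto (fun m : ℕ => ((1 / b m : ℝ) : EReal) *
          ENNReal.log (∫⁻ ω, ENNReal.ofReal (Real.exp (β * X m ω)) ∂(P m))) atTop
        (𝓝 ((C₀ * β ^ p : ℝ) : EReal)) := by
  intro β hβ
  rw [tendsto_order]
  constructor
  · -- lower bound
    intro e he
    obtain ⟨d, hed, hd⟩ := EReal.lt_iff_exists_real_btwn.1 he
    have hdR : d < C₀ * β ^ p := EReal.coe_lt_coe_iff.1 hd
    set s₀ : ℝ := 2 * Real.sqrt (p * C₀) * β ^ ((p+1)/2) with hs₀def
    have hs₀ : 0 < s₀ := by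
      have h1 : 0 < Real.sqrt (p * C₀) := Real.sqrt_pos.2 (by positivity)
      have h2 : (0:ℝ) < β ^ ((p+1)/2) := Real.rpow_pos_of_pos hβ _
      positivity
    have hΛeq := st9_lamstar_lower hp hC₀ hβ
    rw [← hs₀def] at hΛeq
    have hlt : ((d + s₀^2/(4*β) : ℝ) : EReal)
        < ((((p + 1) / p) * (p * C₀) ^ ((1:ℝ) / (p + 1)) * (s₀ / 2) ^ (2 * p / (p + 1)) : ℝ)
            : EReal) := by
      apply EReal.coe_lt_coe_iff.2
      rw [hΛeq]
      linarith
    filter_upwards [(hlb s₀ hs₀).eventually_const_lt hlt] with m hm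
    refine lt_trans hed (st9_lower_step (c := s₀^2/(4*β))
      (Jv := ∫⁻ ω, ENNReal.ofReal (Real.exp (s₀ * Real.sqrt (b m * X m ω))) ∂(P m))
      (hbpos m) ?_ ?_)
    · calc (∫⁻ ω, ENNReal.ofReal (Real.exp (s₀ * Real.sqrt (b m * X m ω))) ∂(P m))
          ≤ ∫⁻ ω, ENNReal.ofReal (Real.exp (s₀^2/(4*β) * b m))
              * ENNReal.ofReal (Real.exp (β * X m ω)) ∂(P m) := by
            apply lintegral_mono
            intro ω
            dsimp only
            rw [← ENNReal.ofReal_mul (Real.exp_pos _).le, ← Real.exp_add]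
            apply ENNReal.ofReal_le_ofReal
            apply Real.exp_le_exp.2
            have := st9_amgm hs₀.le (hbpos m).le (hXnonneg m ω) hβ
            have harith : s₀^2/(4*β) * b m = s₀^2 * b m / (4*β) := by ring
            linarith [harith]
        _ = ENNReal.ofReal (Real.exp (s₀^2/(4*β) * b m))
              * ∫⁻ ω, ENNReal.ofReal (Real.exp (β * X m ω)) ∂(P m) :=
            lintegral_const_mul _
              (ENNReal.measurable_ofReal.comp (Real.measurable_exp.comp
                ((hXmeas m).const_mul β)))
    · exact hm
  · -- upper bound
    intro e he
    obtain ⟨d, hd1, hd2⟩ := EReal.lt_iff_exists_real_btwn.1 he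
    have hdR : C₀ * β ^ p < d := EReal.coe_lt_coe_iff.1 hd1
    set ε : ℝ := (d - C₀ * β ^ p)/2 with hεdef
    have hε : 0 < ε := by rw [hεdef]; linarith
    have hde : d = C₀ * β ^ p + 2*ε := by rw [hεdef]; ring
    obtain ⟨M, hM1, -⟩ := EReal.lt_iff_exists_real_btwn.1 (hub (2*β) (by positivity))
    have hevM : ∀ᶠ m in atTop,
        (∫⁻ ω, ENNReal.ofReal (Real.exp (2*β * X m ω)) ∂(P m))
          ≤ ENNReal.ofReal (Real.exp (M * b m)) := by
      filter_upwards [eventually_lt_of_limsup_lt hM1] with m hm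
      exact st9_expbound (hbpos m) hm
    set K : ℝ := Real.sqrt (max 1 ((M - C₀ * β ^ p)/β)) with hKdef
    have hmax1 : (1:ℝ) ≤ max 1 ((M - C₀*β^p)/β) := le_max_left _ _
    have hK : 0 < K := Real.sqrt_pos.2 (by linarith)
    have hK2 : K^2 = max 1 ((M - C₀*β^p)/β) := Real.sq_sqrt (by linarith)
    have hMK : M - β*K^2 ≤ C₀ * β ^ p := by
      have h1 : (M - C₀*β^p)/β ≤ K^2 := by rw [hK2]; exact le_max_right _ _
      rw [div_le_iff₀ hβ] at h1
      nlinarith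
    obtain ⟨N, hNgt⟩ := exists_nat_gt (4*β*K^2/ε)
    have hNpos : (0:ℝ) < N := lt_trans (by positivity) hNgt
    have hN1 : 1 ≤ N := by
      have : 0 < N := by exact_mod_cast hNpos
      omega
    have hρ : 2*β*K^2/(N:ℝ) ≤ ε/2 := by
      rw [div_le_iff₀ hNpos]
      have h1 := (div_lt_iff₀ hε).1 hNgt
      nlinarith
    have hevJ : ∀ᶠ m in atTop, ∀ j ∈ Finset.Icc 1 N,
        (∫⁻ ω, ENNReal.ofReal (Real.exp (((j:ℝ)*(2*β*K/N)) * Real.sqrt (b m * X m ω))) ∂(P m))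
          ≤ ENNReal.ofReal (Real.exp ((((p + 1) / p) * (p * C₀) ^ ((1:ℝ) / (p + 1)) *
              (((j:ℝ)*(2*β*K/N)) / 2) ^ (2 * p / (p + 1)) + ε/2) * b m)) := by
      rw [Filter.eventually_all_finset]
      intro j hj
      have hj1 : 1 ≤ j := (Finset.mem_Icc.1 hj).1
      have hjR : (1:ℝ) ≤ (j:ℝ) := by exact_mod_cast hj1
      have hjpos : (0:ℝ) < (j:ℝ)*(2*β*K/N) :=
        _root_.mul_pos (by linarith) (by positivity)
      have hlt : ((((p + 1) / p) * (p * C₀) ^ ((1:ℝ)/(p+1)) *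
            (((j:ℝ)*(2*β*K/N))/2) ^ (2*p/(p+1)) : ℝ) : EReal)
          < ((((p + 1) / p) * (p * C₀) ^ ((1:ℝ)/(p+1)) *
            (((j:ℝ)*(2*β*K/N))/2) ^ (2*p/(p+1)) + ε/2 : ℝ) : EReal) :=
        EReal.coe_lt_coe_iff.2 (by linarith)
      filter_upwards [(hlb ((j:ℝ)*(2*β*K/N)) hjpos).eventually_lt_const hlt] with m hm
      exact st9_expbound (hbpos m) hm
    have hevB : ∀ᶠ m in atTop, Real.log ((N:ℝ)+1) ≤ ε/2 * b m := by
      filter_upwards [hbtop.eventually_ge_atTop ((2/ε) * Real.log ((N:ℝ)+1))] with m hm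
      have h1 := mul_le_mul_of_nonneg_left hm (by positivity : (0:ℝ) ≤ ε/2)
      have h2 : ε/2 * ((2/ε) * Real.log ((N:ℝ)+1)) = Real.log ((N:ℝ)+1) := by field_simp
      linarith
    filter_upwards [hevM, hevJ, hevB] with m hmM hmJ hmB
    refine lt_of_le_of_lt ?_ hd2
    have hbm := hbpos m
    set E : ℝ≥0∞ := ENNReal.ofReal (Real.exp ((C₀*β^p + ε) * b m)) with hEdef
    have hmeasJ : ∀ s : ℝ, Measurable fun ω =>
        ENNReal.ofReal (Real.exp (s * Real.sqrt (b m * X m ω))) := fun s =>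
      ENNReal.measurable_ofReal.comp (Real.measurable_exp.comp
        ((((hXmeas m).const_mul (b m)).sqrt).const_mul s))
    have hmeasI : ∀ γ : ℝ, Measurable fun ω =>
        ENNReal.ofReal (Real.exp (γ * X m ω)) := fun γ =>
      ENNReal.measurable_ofReal.comp (Real.measurable_exp.comp ((hXmeas m).const_mul γ))
    have hint : (∫⁻ ω, ENNReal.ofReal (Real.exp (β * X m ω)) ∂(P m))
        ≤ (∑ j ∈ Finset.Icc 1 N,
            ENNReal.ofReal (Real.exp (2*β*K^2/N*(b m) - (b m)*((j:ℝ)*(2*β*K/N))^2/(4*β)))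
            * ∫⁻ ω, ENNReal.ofReal (Real.exp (((j:ℝ)*(2*β*K/N)) * Real.sqrt (b m * X m ω))) ∂(P m))
          + ENNReal.ofReal (Real.exp (-(β*K^2*(b m))))
            * ∫⁻ ω, ENNReal.ofReal (Real.exp (2*β * X m ω)) ∂(P m) := by
      have hpt : ∀ ω, ENNReal.ofReal (Real.exp (β * X m ω))
          ≤ (∑ j ∈ Finset.Icc 1 N,
              ENNReal.ofReal (Real.exp (2*β*K^2/N*(b m) - (b m)*((j:ℝ)*(2*β*K/N))^2/(4*β)))
              * ENNReal.ofReal (Real.exp (((j:ℝ)*(2*β*K/N)) * Real.sqrt (b m * X m ω))))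
            + ENNReal.ofReal (Real.exp (-(β*K^2*(b m))))
              * ENNReal.ofReal (Real.exp (2*β * X m ω)) := by
        intro ω
        have hre := st9_pointwise hβ hK hN1 hbm (hXnonneg m ω)
        calc ENNReal.ofReal (Real.exp (β * X m ω))
            ≤ ENNReal.ofReal ((∑ j ∈ Finset.Icc 1 N,
                Real.exp (2*β*K^2/N*(b m) - (b m)*((j:ℝ)*(2*β*K/N))^2/(4*β))
                * Real.exp (((j:ℝ)*(2*β*K/N)) * Real.sqrt (b m * X m ω)))
              + Real.exp (-(β*K^2*(b m))) * Real.exp (2*β * X m ω)) :=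
              ENNReal.ofReal_le_ofReal hre
          _ = _ := by
              rw [ENNReal.ofReal_add (Finset.sum_nonneg fun i _ => by positivity)
                  (by positivity),
                ENNReal.ofReal_sum_of_nonneg (fun i _ => by positivity),
                ENNReal.ofReal_mul (Real.exp_pos _).le]
              congr 1
              exact Finset.sum_congr rfl fun j hj => ENNReal.ofReal_mul (Real.exp_pos _).le
      calc (∫⁻ ω, ENNReal.ofReal (Real.exp (β * X m ω)) ∂(P m))
          ≤ ∫⁻ ω, ((∑ j ∈ Finset.Icc 1 N,
              ENNReal.ofReal (Real.exp (2*β*K^2/N*(b m) - (b m)*((j:ℝ)*(2*β*K/N))^2/(4*β)))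
              * ENNReal.ofReal (Real.exp (((j:ℝ)*(2*β*K/N)) * Real.sqrt (b m * X m ω))))
            + ENNReal.ofReal (Real.exp (-(β*K^2*(b m))))
              * ENNReal.ofReal (Real.exp (2*β * X m ω))) ∂(P m) := lintegral_mono hpt
        _ = _ := by
            rw [lintegral_add_right _ ((hmeasI (2*β)).const_mul _)]
            congr 1
            · rw [lintegral_finset_sum _ (fun j _ => (hmeasJ _).const_mul _)]
              exact Finset.sum_congr rfl fun j _ => lintegral_const_mul _ (hmeasJ _)
            · exact lintegral_const_mul _ (hmeasI (2*β))
    have hterm : ∀ j ∈ Finset.Icc 1 N,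
        ENNReal.ofReal (Real.exp (2*β*K^2/N*(b m) - (b m)*((j:ℝ)*(2*β*K/N))^2/(4*β)))
          * (∫⁻ ω, ENNReal.ofReal (Real.exp (((j:ℝ)*(2*β*K/N)) * Real.sqrt (b m * X m ω))) ∂(P m))
          ≤ E := by
      intro j hj
      have hjR : (0:ℝ) ≤ (j:ℝ)*(2*β*K/N) := by positivity
      calc ENNReal.ofReal (Real.exp (2*β*K^2/N*(b m) - (b m)*((j:ℝ)*(2*β*K/N))^2/(4*β)))
            * (∫⁻ ω, ENNReal.ofReal (Real.exp (((j:ℝ)*(2*β*K/N)) * Real.sqrt (b m * X m ω))) ∂(P m))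
          ≤ ENNReal.ofReal (Real.exp (2*β*K^2/N*(b m) - (b m)*((j:ℝ)*(2*β*K/N))^2/(4*β)))
            * ENNReal.ofReal (Real.exp ((((p + 1) / p) * (p * C₀) ^ ((1:ℝ) / (p + 1)) *
                (((j:ℝ)*(2*β*K/N)) / 2) ^ (2 * p / (p + 1)) + ε/2) * b m)) :=
            mul_le_mul_right (hmJ j hj) _
        _ = ENNReal.ofReal (Real.exp ((2*β*K^2/N*(b m) - (b m)*((j:ℝ)*(2*β*K/N))^2/(4*β))
              + (((p + 1) / p) * (p * C₀) ^ ((1:ℝ) / (p + 1)) *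
                (((j:ℝ)*(2*β*K/N)) / 2) ^ (2 * p / (p + 1)) + ε/2) * b m)) := by
            rw [← ENNReal.ofReal_mul (Real.exp_pos _).le, ← Real.exp_add]
        _ ≤ E := by
            rw [hEdef]
            apply ENNReal.ofReal_le_ofReal
            apply Real.exp_le_exp.2
            have hy := st9_young (s := (j:ℝ)*(2*β*K/N)) hp hC₀ hjR hβ
            have hbr : 2*β*K^2/(N:ℝ) - ((j:ℝ)*(2*β*K/N))^2/(4*β)
                + (((p + 1) / p) * (p * C₀) ^ ((1:ℝ) / (p + 1)) *
                  (((j:ℝ)*(2*β*K/N)) / 2) ^ (2 * p / (p + 1)) + ε/2)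
                ≤ C₀*β^p + ε := by linarith
            calc 2*β*K^2/(N:ℝ)*(b m) - (b m)*((j:ℝ)*(2*β*K/N))^2/(4*β)
                  + (((p + 1) / p) * (p * C₀) ^ ((1:ℝ) / (p + 1)) *
                    (((j:ℝ)*(2*β*K/N)) / 2) ^ (2 * p / (p + 1)) + ε/2) * b m
                = (2*β*K^2/(N:ℝ) - ((j:ℝ)*(2*β*K/N))^2/(4*β)
                  + (((p + 1) / p) * (p * C₀) ^ ((1:ℝ) / (p + 1)) *
                    (((j:ℝ)*(2*β*K/N)) / 2) ^ (2 * p / (p + 1)) + ε/2)) * b m := by ring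
              _ ≤ (C₀*β^p + ε) * b m := mul_le_mul_of_nonneg_right hbr hbm.le
    have htail : ENNReal.ofReal (Real.exp (-(β*K^2*(b m))))
        * (∫⁻ ω, ENNReal.ofReal (Real.exp (2*β * X m ω)) ∂(P m)) ≤ E := by
      calc ENNReal.ofReal (Real.exp (-(β*K^2*(b m))))
            * (∫⁻ ω, ENNReal.ofReal (Real.exp (2*β * X m ω)) ∂(P m))
          ≤ ENNReal.ofReal (Real.exp (-(β*K^2*(b m)))) * ENNReal.ofReal (Real.exp (M * b m)) :=
            mul_le_mul_right hmM _
        _ = ENNReal.ofReal (Real.exp (-(β*K^2*(b m)) + M * b m)) := by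
            rw [← ENNReal.ofReal_mul (Real.exp_pos _).le, ← Real.exp_add]
        _ ≤ E := by
            rw [hEdef]
            apply ENNReal.ofReal_le_ofReal
            apply Real.exp_le_exp.2
            calc -(β*K^2*(b m)) + M * b m = (M - β*K^2) * b m := by ring
              _ ≤ (C₀*β^p + ε) * b m :=
                  mul_le_mul_of_nonneg_right (by linarith) hbm.le
    have htot : (∫⁻ ω, ENNReal.ofReal (Real.exp (β * X m ω)) ∂(P m)) ≤ ((N:ℝ≥0∞) + 1) * E := by
      calc (∫⁻ ω, ENNReal.ofReal (Real.exp (β * X m ω)) ∂(P m))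
          ≤ _ := hint
        _ ≤ (∑ _j ∈ Finset.Icc 1 N, E) + E := add_le_add (Finset.sum_le_sum hterm) htail
        _ = (N:ℝ≥0∞) * E + E := by
            rw [Finset.sum_const, Nat.card_Icc]
            simp [nsmul_eq_mul]
        _ = ((N:ℝ≥0∞)+1) * E := by ring
    have hcoe : ((N:ℝ≥0∞) + 1) * E
        = ENNReal.ofReal (Real.exp (Real.log ((N:ℝ)+1) + (C₀*β^p + ε) * b m)) := by
      rw [Real.exp_add, Real.exp_log (by positivity : (0:ℝ) < (N:ℝ)+1), hEdef,
        ENNReal.ofReal_mul (by positivity : (0:ℝ) ≤ (N:ℝ)+1),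
        ENNReal.ofReal_add (by positivity : (0:ℝ) ≤ (N:ℝ)) (by norm_num : (0:ℝ) ≤ (1:ℝ)),
        ENNReal.ofReal_natCast, ENNReal.ofReal_one]
    have hL := st9_mul_le hbm (st9_log_le (htot.trans (le_of_eq hcoe)))
    refine le_trans hL (EReal.coe_le_coe_iff.2 ?_)
    have h1 : 1/(b m) * (Real.log ((N:ℝ)+1) + (C₀*β^p + ε) * b m)
        = Real.log ((N:ℝ)+1)/(b m) + (C₀*β^p + ε) := by field_simp
    have h2 : Real.log ((N:ℝ)+1)/(b m) ≤ ε/2 := by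
      rw [div_le_iff₀ hbm]
      linarith
    rw [h1]
    linarith

end
end

section
/- Fix an integer d ≥ 1 and reals α₁,…,α_d ∈ (0,1]. Let N ≥ 4 be a real number, let z, z′ ∈ (Nℤ)^d with z ≠ z′ (i.e., each coordinate of z and z′ is an integer multiple of N), and let w ∈ ℝ^d satisfy 0 < |w_i| ≤ 2 for every i = 1,…,d. Then ∏_{i=1}^d |(z_i − z_i′) + w_i|^{−α_i} ≤ (2/(N−2))^{min_{1≤i≤d} α_i} · ∏_{i=1}^d |w_i|^{−α_i}. -/
open Real

/-- decorrelation inequality (2.9).  For exponents `αᵢ ∈ (0,1]`,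
`N ≥ 4`, lattice points `z ≠ z'` in `(Nℤ)^d`, and perturbations `0 < |wᵢ| ≤ 2`,
`∏ᵢ |(zᵢ-zᵢ') + wᵢ|^{-αᵢ} ≤ (2/(N-2))^{minᵢ αᵢ} · ∏ᵢ |wᵢ|^{-αᵢ}`. -/
theorem statement_16
    (d : ℕ) (hd : 1 ≤ d) (α : Fin d → ℝ) (hα : ∀ i, 0 < α i ∧ α i ≤ 1)
    (N : ℝ) (hN : 4 ≤ N) (z z' : Fin d → ℝ)
    (hz : ∀ i, ∃ m : ℤ, z i = N * m) (hz' : ∀ i, ∃ m : ℤ, z' i = N * m)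
    (hne : z ≠ z') (w : Fin d → ℝ) (hw : ∀ i, 0 < |w i| ∧ |w i| ≤ 2) :
    (∏ i, |z i - z' i + w i| ^ (-(α i)))
      ≤ (2 / (N - 2)) ^
          (Finset.univ.inf' ⟨(⟨0, hd⟩ : Fin d), Finset.mem_univ _⟩ α) *
        ∏ i, |w i| ^ (-(α i)) := by
  obtain ⟨i₀, hi₀⟩ : ∃ i, z i ≠ z' i := by
    by_contra h; push_neg at h; exact hne (funext h)
  set m := Finset.univ.inf' ⟨(⟨0, hd⟩ : Fin d), Finset.mem_univ _⟩ α with hm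
  have hm_le : m ≤ α i₀ := Finset.inf'_le _ (Finset.mem_univ _)
  have hN2 : (2:ℝ) ≤ N - 2 := by linarith
  have hN2' : (0:ℝ) < N - 2 := by linarith
  have hratio0 : 0 < 2 / (N - 2) := by positivity
  have hratio1 : 2 / (N - 2) ≤ 1 := by rw [div_le_one hN2']; exact hN2
  -- lower bound on |z i - z' i + w i| when z i ≠ z' i
  have hbig : ∀ i, z i ≠ z' i → N - 2 ≤ |z i - z' i + w i| := by
    intro i hi
    obtain ⟨a, ha⟩ := hz i; obtain ⟨b, hb⟩ := hz' i
    have hab : a ≠ b := by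
      intro h; apply hi; rw [ha, hb, h]
    have h1 : N ≤ |z i - z' i| := by
      rw [ha, hb, ← mul_sub, abs_mul]
      have hone : (1:ℝ) ≤ |((a:ℝ) - b)| := by
        exact_mod_cast Int.one_le_abs (sub_ne_zero.mpr hab)
      calc N = N * 1 := (mul_one N).symm
        _ ≤ |N| * |((a:ℝ) - b)| := by
            rw [abs_of_nonneg (by linarith : (0:ℝ) ≤ N)]
            exact mul_le_mul_of_nonneg_left hone (by linarith)
    have h2 : |z i - z' i| - |w i| ≤ |z i - z' i + w i| := by
      have h3 := abs_add_le (z i - z' i + w i) (-(w i))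
      rw [abs_neg] at h3
      have : z i - z' i + w i + -(w i) = z i - z' i := by ring
      rw [this] at h3
      linarith
    linarith [(hw i).2]
  have habs_pos : ∀ i, 0 < |z i - z' i + w i| := by
    intro i
    by_cases h : z i = z' i
    · rw [h]; simpa using (hw i).1
    · linarith [hbig i h]
  -- pointwise bound off i₀
  have key : ∀ i, |z i - z' i + w i| ^ (-(α i)) ≤ |w i| ^ (-(α i)) := by
    intro i
    by_cases h : z i = z' i
    · rw [h]; simp
    · exact Real.rpow_le_rpow_of_nonpos (hw i).1
        (le_trans ((hw i).2.trans hN2) (hbig i h)) (neg_nonpos.mpr (hα i).1.le)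
  -- bound at i₀
  have key₀ : |z i₀ - z' i₀ + w i₀| ^ (-(α i₀))
      ≤ (2 / (N - 2)) ^ m * |w i₀| ^ (-(α i₀)) := by
    have h1 : ((N - 2) / 2) * |w i₀| ≤ |z i₀ - z' i₀ + w i₀| := by
      have := hbig i₀ hi₀
      nlinarith [(hw i₀).2, (hw i₀).1]
    have hpos : 0 < ((N - 2) / 2) * |w i₀| := by
      have := (hw i₀).1; positivity
    have h2 : |z i₀ - z' i₀ + w i₀| ^ (-(α i₀))
        ≤ (((N - 2) / 2) * |w i₀|) ^ (-(α i₀)) :=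
      Real.rpow_le_rpow_of_nonpos hpos h1 (neg_nonpos.mpr (hα i₀).1.le)
    rw [Real.mul_rpow (by positivity) (abs_nonneg _)] at h2
    have h3 : ((N - 2) / 2 : ℝ) ^ (-(α i₀)) = (2 / (N - 2)) ^ (α i₀) := by
      rw [Real.rpow_neg (by positivity), ← Real.inv_rpow (by positivity), inv_div]
    have h4 : (2 / (N - 2)) ^ (α i₀) ≤ (2 / (N - 2)) ^ m :=
      Real.rpow_le_rpow_of_exponent_ge hratio0 hratio1 hm_le
    calc |z i₀ - z' i₀ + w i₀| ^ (-(α i₀))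
        ≤ ((N - 2) / 2 : ℝ) ^ (-(α i₀)) * |w i₀| ^ (-(α i₀)) := h2
      _ = (2 / (N - 2)) ^ (α i₀) * |w i₀| ^ (-(α i₀)) := by rw [h3]
      _ ≤ (2 / (N - 2)) ^ m * |w i₀| ^ (-(α i₀)) := by
          exact mul_le_mul_of_nonneg_right h4 (Real.rpow_nonneg (abs_nonneg _) _)
  -- combine
  rw [← Finset.mul_prod_erase Finset.univ (fun i => |z i - z' i + w i| ^ (-(α i)))
      (Finset.mem_univ i₀),
    ← Finset.mul_prod_erase Finset.univ (fun i => |w i| ^ (-(α i)))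
      (Finset.mem_univ i₀), ← mul_assoc]
  apply mul_le_mul key₀
  · exact Finset.prod_le_prod (fun i _ => Real.rpow_nonneg (abs_nonneg _) _)
      (fun i _ => key i)
  · exact Finset.prod_nonneg (fun i _ => Real.rpow_nonneg (abs_nonneg _) _)
  · positivity
end
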